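/- Let G' be a graph with edge vw and G'' the graph obtained by subdividing vw three times. If every odd-dominating set D' of G' satisfies that neither D' nor V(G')∖D' is an independent set, then every odd-dominating set D'' of G'' satisfies that neither D'' nor V(G'')∖D'' is independent. Consequently, if additionally G'' has an odd-dominating set, χ_os(G'') ≥ 4. -/

import Mathlib

open SimpleGraph Finset
open scoped Classical

/-- The closed neighborhood `N[v]` of a vertex `v`. -/
def closedNbhd {V : Type*} (G : SimpleGraph V) (v : V) : Set V :=
  insert v (G.neighborSet v)

/-- `D` is an odd-dominating set: `|N[v] ∩ D|` is odd for every vertex `v`. -/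
def OddDomSet {V : Type*} (G : SimpleGraph V) (D : Set V) : Prop :=
  ∀ v, Odd ((closedNbhd G v ∩ D).ncard)

/-- `f` is an odd-sum coloring: a proper coloring with positive integer colors
such that the sum of colors over each closed neighborhood is odd. -/
def IsOddSumColoring {V : Type*} [Fintype V] (G : SimpleGraph V) (f : V → ℕ) : Prop :=
  (∀ v, 0 < f v) ∧ (∀ ⦃a b⦄, G.Adj a b → f a ≠ f b) ∧
  (∀ v, Odd (∑ w ∈ (closedNbhd G v).toFinset, f w))

/-- The odd-sum chromatic number: minimum number of colors used in an odd-sum coloring. -/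
noncomputable def chiOS {V : Type*} [Fintype V] (G : SimpleGraph V) : ℕ :=
  sInf {n | ∃ f : V → ℕ, IsOddSumColoring G f ∧ (Finset.univ.image f).card = n}

/-- The graph obtained from `G` by subdividing the edge `vw` three times:
delete `vw` and add a path `v, s₀, s₁, s₂, w` through three new vertices. -/
def subdiv3 {V : Type*} (G : SimpleGraph V) (v w : V) : SimpleGraph (V ⊕ Fin 3) :=
  SimpleGraph.fromRel (fun a b =>
    match a, b with
    | .inl x, .inl y => G.Adj x y ∧ ¬(x = v ∧ y = w) ∧ ¬(x = w ∧ y = v)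
    | .inl x, .inr i => (x = v ∧ i = 0) ∨ (x = w ∧ i = 2)
    | .inr i, .inr j => i.val + 1 = j.val
    | _, _ => False)

/-- `s` is an independent set in `G`. -/
def IndepSet {V : Type*} (G : SimpleGraph V) (s : Set V) : Prop :=
  ∀ x ∈ s, ∀ y ∈ s, ¬ G.Adj x y

section Aux

variable {V : Type*} {G : SimpleGraph V} {v w : V}

lemma adj_inl_inl {x y : V} : (subdiv3 G v w).Adj (.inl x) (.inl y) ↔
    G.Adj x y ∧ ¬(x = v ∧ y = w) ∧ ¬(x = w ∧ y = v) := by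
  simp only [subdiv3, SimpleGraph.fromRel_adj, ne_eq, Sum.inl.injEq]
  constructor
  · rintro ⟨hne, h | h⟩
    · exact h
    · exact ⟨h.1.symm, fun hc => h.2.2 ⟨hc.2, hc.1⟩, fun hc => h.2.1 ⟨hc.2, hc.1⟩⟩
  · rintro h
    exact ⟨h.1.ne, Or.inl h⟩

lemma adj_inl_inr {x : V} {i : Fin 3} : (subdiv3 G v w).Adj (.inl x) (.inr i) ↔
    (x = v ∧ i = 0) ∨ (x = w ∧ i = 2) := by
  simp [subdiv3, SimpleGraph.fromRel_adj]

lemma adj_inr_inl {x : V} {i : Fin 3} : (subdiv3 G v w).Adj (.inr i) (.inl x) ↔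
    (x = v ∧ i = 0) ∨ (x = w ∧ i = 2) := by
  rw [SimpleGraph.adj_comm]; exact adj_inl_inr

lemma adj_inr_inr {i j : Fin 3} : (subdiv3 G v w).Adj (.inr i) (.inr j) ↔
    (i.val + 1 = j.val ∨ j.val + 1 = i.val) := by
  simp only [subdiv3, SimpleGraph.fromRel_adj, ne_eq, Sum.inr.injEq]
  constructor
  · rintro ⟨-, h⟩; exact h
  · rintro h
    refine ⟨fun hc => ?_, h⟩
    subst hc; omega

lemma mem_closedNbhd {u y : V} : y ∈ closedNbhd G u ↔ y = u ∨ G.Adj u y := by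
  simp [closedNbhd]

lemma cn_inr0 : closedNbhd (subdiv3 G v w) (.inr 0) =
    {Sum.inl v, Sum.inr 0, Sum.inr 1} := by
  ext y
  rcases y with x | j
  · simp [mem_closedNbhd, adj_inr_inl, Fin.ext_iff]
  · have := j.isLt
    simp only [mem_closedNbhd, adj_inr_inr, Fin.ext_iff, Set.mem_insert_iff, Set.mem_singleton_iff, Sum.inr.injEq, reduceCtorEq, false_or, or_false, Fin.val_zero, Fin.val_one, Fin.val_two]
    omega

lemma cn_inr1 : closedNbhd (subdiv3 G v w) (.inr 1) =
    {Sum.inr 0, Sum.inr 1, Sum.inr 2} := by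
  ext y
  rcases y with x | j
  · simp [mem_closedNbhd, adj_inr_inl, Fin.ext_iff]
  · have := j.isLt
    simp only [mem_closedNbhd, adj_inr_inr, Fin.ext_iff, Set.mem_insert_iff, Set.mem_singleton_iff, Sum.inr.injEq, reduceCtorEq, false_or, Fin.val_zero, Fin.val_one, Fin.val_two]
    omega

lemma cn_inr2 : closedNbhd (subdiv3 G v w) (.inr 2) =
    {Sum.inl w, Sum.inr 1, Sum.inr 2} := by
  ext y
  rcases y with x | j
  · simp [mem_closedNbhd, adj_inr_inl, Fin.ext_iff]
  · have := j.isLt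
    simp [mem_closedNbhd, adj_inr_inr, Fin.ext_iff]
    omega

lemma cn_inl_v (hvw : G.Adj v w) : closedNbhd (subdiv3 G v w) (.inl v) =
    Sum.inl '' (closedNbhd G v \ {w}) ∪ {Sum.inr 0} := by
  have hne : v ≠ w := hvw.ne
  ext y
  rcases y with x | j
  · simp only [mem_closedNbhd, adj_inl_inl, Set.mem_union, Set.mem_image,
      Set.mem_singleton_iff, Sum.inl.injEq, Sum.inr.injEq, Set.mem_diff]
    constructor
    · rintro (rfl | ⟨h, h1, -⟩)
      · exact Or.inl ⟨x, ⟨mem_closedNbhd.mpr (Or.inl rfl), fun hc => hne hc⟩, rfl⟩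
      · exact Or.inl ⟨x, ⟨mem_closedNbhd.mpr (Or.inr h), fun hc => h1 ⟨by trivial, hc⟩⟩, rfl⟩
    · rintro (⟨z, ⟨hz, hzw⟩, rfl⟩ | h)
      · rcases mem_closedNbhd.mp hz with rfl | h
        · exact Or.inl rfl
        · exact Or.inr ⟨h, fun hc => hzw hc.2, fun hc => hne hc.1⟩
      · exact absurd h (by simp)
  · simp only [mem_closedNbhd, adj_inl_inr, Set.mem_union, Set.mem_image,
      Set.mem_singleton_iff, Sum.inr.injEq]
    constructor
    · rintro (h | (⟨-, rfl⟩ | ⟨hvw', -⟩))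
      · exact absurd h (by simp)
      · simp
      · exact absurd hvw' hne
    · rintro (⟨z, -, hz⟩ | rfl)
      · exact absurd hz (by simp)
      · exact Or.inr (Or.inl ⟨by trivial, by trivial⟩)

lemma cn_inl_w (hvw : G.Adj v w) : closedNbhd (subdiv3 G v w) (.inl w) =
    Sum.inl '' (closedNbhd G w \ {v}) ∪ {Sum.inr 2} := by
  have hne : w ≠ v := hvw.ne'
  ext y
  rcases y with x | j
  · simp only [mem_closedNbhd, adj_inl_inl, Set.mem_union, Set.mem_image,
      Set.mem_singleton_iff, Sum.inl.injEq, Sum.inr.injEq, Set.mem_diff]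
    constructor
    · rintro (rfl | ⟨h, -, h2⟩)
      · exact Or.inl ⟨x, ⟨mem_closedNbhd.mpr (Or.inl rfl), fun hc => hne hc⟩, rfl⟩
      · exact Or.inl ⟨x, ⟨mem_closedNbhd.mpr (Or.inr h), fun hc => h2 ⟨by trivial, hc⟩⟩, rfl⟩
    · rintro (⟨z, ⟨hz, hzv⟩, rfl⟩ | h)
      · rcases mem_closedNbhd.mp hz with rfl | h
        · exact Or.inl rfl
        · exact Or.inr ⟨h, fun hc => hne hc.1, fun hc => hzv hc.2⟩
      · exact absurd h (by simp)
  · simp only [mem_closedNbhd, adj_inl_inr, Set.mem_union, Set.mem_image,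
      Set.mem_singleton_iff, Sum.inr.injEq]
    constructor
    · rintro (h | (⟨hwv, -⟩ | ⟨-, rfl⟩))
      · exact absurd h (by simp)
      · exact absurd hwv hne
      · simp
    · rintro (⟨z, -, hz⟩ | rfl)
      · exact absurd hz (by simp)
      · exact Or.inr (Or.inr ⟨by trivial, by trivial⟩)

lemma cn_inl_x {x : V} (hx1 : x ≠ v) (hx2 : x ≠ w) :
    closedNbhd (subdiv3 G v w) (.inl x) = Sum.inl '' closedNbhd G x := by
  ext y
  rcases y with z | j
  · simp only [mem_closedNbhd, adj_inl_inl, Set.mem_image, Sum.inl.injEq]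
    constructor
    · rintro (rfl | ⟨h, -, -⟩)
      · exact ⟨z, mem_closedNbhd.mpr (Or.inl rfl), rfl⟩
      · exact ⟨z, mem_closedNbhd.mpr (Or.inr h), rfl⟩
    · rintro ⟨u, hu, rfl⟩
      rcases mem_closedNbhd.mp hu with rfl | h
      · exact Or.inl rfl
      · exact Or.inr ⟨h, fun hc => hx1 hc.1, fun hc => hx2 hc.1⟩
  · simp [mem_closedNbhd, adj_inl_inr, hx1, hx2]

end Aux

section Card

variable {α : Type*} [Fintype α]

lemma ncard_inter_toFinset (S D : Set α) :
    (S ∩ D).ncard = (S.toFinset.filter (· ∈ D)).card := by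
  rw [Set.ncard_eq_toFinset_card']
  congr 1
  ext x
  simp

omit [Fintype α] in
lemma ncard_singleton_inter (a : α) (D : Set α) :
    (({a} : Set α) ∩ D).ncard = if a ∈ D then 1 else 0 := by
  by_cases h : a ∈ D
  · rw [if_pos h, Set.inter_eq_self_of_subset_left (by simpa using h)]
    simp
  · rw [if_neg h, Set.singleton_inter_eq_empty.mpr h]
    simp

lemma ncard3 {a b c : α} (hab : a ≠ b) (hac : a ≠ c) (hbc : b ≠ c) (D : Set α) :
    (({a, b, c} : Set α) ∩ D).ncard =
      (if a ∈ D then 1 else 0) + (if b ∈ D then 1 else 0) + (if c ∈ D then 1 else 0) := by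
  have h1 : ({a, b, c} : Set α) ∩ D = ({a} ∩ D) ∪ (({b} ∩ D) ∪ ({c} ∩ D)) := by
    rw [← Set.union_inter_distrib_right, ← Set.union_inter_distrib_right]
    rfl
  rw [h1, Set.ncard_union_eq, Set.ncard_union_eq, ncard_singleton_inter,
    ncard_singleton_inter, ncard_singleton_inter, add_assoc]
  · exact Set.disjoint_of_subset Set.inter_subset_left Set.inter_subset_left
      (by simp [Set.disjoint_singleton_left, hbc])
  · refine Set.disjoint_of_subset Set.inter_subset_left
      (Set.union_subset_union Set.inter_subset_left Set.inter_subset_left) ?_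
    simp [Set.disjoint_singleton_left, hab, hac]

lemma ncard_split_mem {S D : Set α} {x : α} (hx : x ∈ S) :
    (S ∩ D).ncard = ((S \ {x}) ∩ D).ncard + (if x ∈ D then 1 else 0) := by
  have h1 : S ∩ D = ((S \ {x}) ∩ D) ∪ ({x} ∩ D) := by
    rw [← Set.union_inter_distrib_right, Set.diff_union_self,
      Set.union_eq_self_of_subset_right (by simpa using hx)]
  rw [h1, Set.ncard_union_eq, ncard_singleton_inter]
  exact Set.disjoint_of_subset Set.inter_subset_left Set.inter_subset_left
    (by simp)

lemma ncard_image_union_singleton (S : Set α) {β : Type*} [Fintype β]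
    (f : α → β) (hf : Function.Injective f) (b : β) (hb : b ∉ Set.range f)
    (D : Set β) :
    ((f '' S ∪ {b}) ∩ D).ncard = (S ∩ f ⁻¹' D).ncard + (if b ∈ D then 1 else 0) := by
  rw [Set.union_inter_distrib_right, Set.ncard_union_eq, ← Set.image_inter_preimage,
    Set.ncard_image_of_injective _ hf, ncard_singleton_inter]
  exact Set.disjoint_of_subset Set.inter_subset_left Set.inter_subset_left
    (by simp [Set.disjoint_singleton_right]; rintro x - rfl; exact hb ⟨x, rfl⟩)

omit [Fintype α] in
lemma ncard_image_inter (S : Set α) {β : Type*} (f : α → β) (hf : Function.Injective f)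
    (D : Set β) : ((f '' S) ∩ D).ncard = (S ∩ f ⁻¹' D).ncard := by
  rw [← Set.image_inter_preimage, Set.ncard_image_of_injective _ hf]

end Card

lemma key {V : Type*} [Fintype V] {G : SimpleGraph V} {v w : V} (hvw : G.Adj v w)
    {D : Set (V ⊕ Fin 3)} (hD : OddDomSet (subdiv3 G v w) D) :
    OddDomSet G (Sum.inl ⁻¹' D) ∧ (Sum.inl v ∈ D ↔ Sum.inr 2 ∈ D) ∧
      (Sum.inl w ∈ D ↔ Sum.inr 0 ∈ D) ∧
      ((Sum.inr 0 ∈ D ↔ Sum.inr 2 ∈ D) → Sum.inr (1 : Fin 3) ∈ D) := by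
  have h0 := hD (Sum.inr 0)
  have h1 := hD (Sum.inr 1)
  have h2 := hD (Sum.inr 2)
  have hv := hD (Sum.inl v)
  have hw := hD (Sum.inl w)
  rw [cn_inr0, ncard3 (by simp) (by simp) (by simp [Fin.ext_iff])] at h0
  rw [cn_inr1, ncard3 (by simp [Fin.ext_iff]) (by simp [Fin.ext_iff])
    (by simp [Fin.ext_iff])] at h1
  rw [cn_inr2, ncard3 (by simp) (by simp) (by simp [Fin.ext_iff])] at h2
  rw [cn_inl_v hvw,
    ncard_image_union_singleton _ Sum.inl Sum.inl_injective (Sum.inr 0) (by simp) D] at hv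
  rw [cn_inl_w hvw,
    ncard_image_union_singleton _ Sum.inl Sum.inl_injective (Sum.inr 2) (by simp) D] at hw
  set a := (if Sum.inl v ∈ D then 1 else 0 : ℕ) with ha
  set c := (if Sum.inl w ∈ D then 1 else 0 : ℕ) with hc
  set b0 := (if Sum.inr (0 : Fin 3) ∈ D then 1 else 0 : ℕ) with hb0
  set b1 := (if Sum.inr (1 : Fin 3) ∈ D then 1 else 0 : ℕ) with hb1
  set b2 := (if Sum.inr (2 : Fin 3) ∈ D then 1 else 0 : ℕ) with hb2
  have ha' : a ≤ 1 ∧ (a = 1 ↔ Sum.inl v ∈ D) := by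
    rw [ha]; by_cases h : Sum.inl v ∈ D <;> simp [h]
  have hc' : c ≤ 1 ∧ (c = 1 ↔ Sum.inl w ∈ D) := by
    rw [hc]; by_cases h : Sum.inl w ∈ D <;> simp [h]
  have hb0' : b0 ≤ 1 ∧ (b0 = 1 ↔ Sum.inr (0 : Fin 3) ∈ D) := by
    rw [hb0]; by_cases h : Sum.inr (0 : Fin 3) ∈ D <;> simp [h]
  have hb1' : b1 ≤ 1 ∧ (b1 = 1 ↔ Sum.inr (1 : Fin 3) ∈ D) := by
    rw [hb1]; by_cases h : Sum.inr (1 : Fin 3) ∈ D <;> simp [h]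
  have hb2' : b2 ≤ 1 ∧ (b2 = 1 ↔ Sum.inr (2 : Fin 3) ∈ D) := by
    rw [hb2]; by_cases h : Sum.inr (2 : Fin 3) ∈ D <;> simp [h]
  rw [Nat.odd_iff] at h0 h1 h2 hv hw
  have hab2 : a = b2 := by omega
  have hb0c : b0 = c := by omega
  refine ⟨?_, ?_, ?_, ?_⟩
  · intro x
    by_cases hxv : x = v
    · subst hxv
      rw [ncard_split_mem (show w ∈ closedNbhd G x from mem_closedNbhd.mpr (Or.inr hvw))]
      have he : (if w ∈ Sum.inl ⁻¹' D then 1 else 0 : ℕ) = c := by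
        rw [hc]; by_cases h : Sum.inl w ∈ D <;> simp [h, Set.mem_preimage]
      rw [he, Nat.odd_iff]
      omega
    · by_cases hxw : x = w
      · subst hxw
        rw [ncard_split_mem (show v ∈ closedNbhd G x from mem_closedNbhd.mpr
          (Or.inr hvw.symm))]
        have he : (if v ∈ Sum.inl ⁻¹' D then 1 else 0 : ℕ) = a := by
          rw [ha]; by_cases h : Sum.inl v ∈ D <;> simp [h, Set.mem_preimage]
        rw [he, Nat.odd_iff]
        omega
      · have hx := hD (Sum.inl x)
        rwa [cn_inl_x hxv hxw, ncard_image_inter _ Sum.inl Sum.inl_injective D] at hx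
  · rw [← ha'.2, ← hb2'.2]; omega
  · rw [← hc'.2, ← hb0'.2]; omega
  · rw [← hb0'.2, ← hb2'.2, ← hb1'.2]; omega

theorem subdiv3_not_indep_and_chiOS_ge_four {V : Type*} [Fintype V]
    (G : SimpleGraph V) (v w : V) (hvw : G.Adj v w)
    (hG : ∀ D : Set V, OddDomSet G D → ¬ IndepSet G D ∧ ¬ IndepSet G Dᶜ) :
    (∀ D'' : Set (V ⊕ Fin 3), OddDomSet (subdiv3 G v w) D'' →
      ¬ IndepSet (subdiv3 G v w) D'' ∧ ¬ IndepSet (subdiv3 G v w) D''ᶜ) ∧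
    ((∃ D'' : Set (V ⊕ Fin 3), OddDomSet (subdiv3 G v w) D'') →
      4 ≤ chiOS (subdiv3 G v w)) := by
  have part1 : ∀ D'' : Set (V ⊕ Fin 3), OddDomSet (subdiv3 G v w) D'' →
      ¬ IndepSet (subdiv3 G v w) D'' ∧ ¬ IndepSet (subdiv3 G v w) D''ᶜ := by
    intro D hD
    obtain ⟨hdom, hiff1, hiff2, hmid⟩ := key hvw hD
    obtain ⟨hni, hnic⟩ := hG _ hdom
    constructor
    · intro hInd
      apply hni
      intro x hx y hy hxy
      by_cases hcs : (x = v ∧ y = w) ∨ (x = w ∧ y = v)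
      · have hvD : Sum.inl v ∈ D ∧ Sum.inl w ∈ D := by
          rcases hcs with ⟨rfl, rfl⟩ | ⟨rfl, rfl⟩
          · exact ⟨hx, hy⟩
          · exact ⟨hy, hx⟩
        have h2D : Sum.inr 2 ∈ D := hiff1.mp hvD.1
        have h0D : Sum.inr 0 ∈ D := hiff2.mp hvD.2
        have h1D : Sum.inr 1 ∈ D := hmid (by tauto)
        exact hInd _ h0D _ h1D (adj_inr_inr.mpr (by simp))
      · rw [not_or] at hcs
        exact hInd _ hx _ hy (adj_inl_inl.mpr ⟨hxy, hcs.1, hcs.2⟩)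
    · intro hInd
      apply hnic
      intro x hx y hy hxy
      have hx' : Sum.inl x ∉ D := hx
      have hy' : Sum.inl y ∉ D := hy
      by_cases hcs : (x = v ∧ y = w) ∨ (x = w ∧ y = v)
      · have hvD : Sum.inl v ∉ D ∧ Sum.inl w ∉ D := by
          rcases hcs with ⟨rfl, rfl⟩ | ⟨rfl, rfl⟩
          · exact ⟨hx', hy'⟩
          · exact ⟨hy', hx'⟩
        have h0D : Sum.inr 0 ∉ D := fun h => hvD.2 (hiff2.mpr h)
        exact hInd _ hvD.1 _ h0D (adj_inl_inr.mpr (Or.inl ⟨rfl, rfl⟩))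
      · rw [not_or] at hcs
        exact hInd _ hx' _ hy' (adj_inl_inl.mpr ⟨hxy, hcs.1, hcs.2⟩)
  refine ⟨part1, ?_⟩
  rintro ⟨D0, hD0⟩
  apply le_csInf
  · refine ⟨_, ⟨fun x => 2 * ((Fintype.equivFin (V ⊕ Fin 3)) x).val +
      (if x ∈ D0 then 1 else 2), ⟨?_, ?_, ?_⟩, rfl⟩⟩
    · intro x
      by_cases h : x ∈ D0 <;> simp [h]
    · intro x y hadj hxy
      apply hadj.ne
      by_cases hx : x ∈ D0 <;> by_cases hy : y ∈ D0 <;> simp only [hx, hy,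
          if_true, if_false] at hxy
      · exact (Fintype.equivFin (V ⊕ Fin 3)).injective (Fin.ext (by omega))
      · omega
      · omega
      · exact (Fintype.equivFin (V ⊕ Fin 3)).injective (Fin.ext (by omega))
    · intro u
      rw [Finset.odd_sum_iff_odd_card_odd]
      have hset : (closedNbhd (subdiv3 G v w) u).toFinset.filter
          (fun x => Odd (2 * ((Fintype.equivFin (V ⊕ Fin 3)) x).val +
            (if x ∈ D0 then 1 else 2))) =
          (closedNbhd (subdiv3 G v w) u).toFinset.filter (· ∈ D0) := by
        apply Finset.filter_congr
        intro x _
        rw [Nat.odd_iff]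
        by_cases h : x ∈ D0 <;> simp [h] <;> omega
      rw [hset, ← ncard_inter_toFinset]
      exact hD0 u
  · intro n hn
    obtain ⟨f, ⟨hpos, hprop, hodd⟩, rfl⟩ := hn
    have hdom : OddDomSet (subdiv3 G v w) {x | Odd (f x)} := by
      intro u
      have h := hodd u
      rw [Finset.odd_sum_iff_odd_card_odd] at h
      rw [ncard_inter_toFinset]
      convert h using 2
      ext x
      simp
    obtain ⟨hni, hnic⟩ := part1 _ hdom
    unfold IndepSet at hni hnic
    push_neg at hni hnic
    obtain ⟨x, hx, y, hy, hxy⟩ := hni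
    obtain ⟨x', hx', y', hy', hxy'⟩ := hnic
    have px : f x % 2 = 1 := Nat.odd_iff.mp hx
    have py : f y % 2 = 1 := Nat.odd_iff.mp hy
    have px' : f x' % 2 = 0 := by
      have h' : ¬ Odd (f x') := hx'
      rw [Nat.odd_iff] at h'
      omega
    have py' : f y' % 2 = 0 := by
      have h' : ¬ Odd (f y') := hy'
      rw [Nat.odd_iff] at h'
      omega
    have d1 : f x ≠ f y := hprop hxy
    have d2 : f x' ≠ f y' := hprop hxy'
    have d3 : f x ≠ f x' := by omega
    have d4 : f x ≠ f y' := by omega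
    have d5 : f y ≠ f x' := by omega
    have d6 : f y ≠ f y' := by omega
    have hsub : ({f x, f y, f x', f y'} : Finset ℕ) ⊆ Finset.univ.image f := by
      intro t ht
      simp only [Finset.mem_insert, Finset.mem_singleton] at ht
      rcases ht with rfl | rfl | rfl | rfl <;>
        exact Finset.mem_image_of_mem f (Finset.mem_univ _)
    have hcard : ({f x, f y, f x', f y'} : Finset ℕ).card = 4 := by
      rw [Finset.card_insert_of_notMem (by simp [d1, d3, d4]),
        Finset.card_insert_of_notMem (by simp [d5, d6]),
        Finset.card_insert_of_notMem (by simp [d2]), Finset.card_singleton]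
    calc (4 : ℕ) = ({f x, f y, f x', f y'} : Finset ℕ).card := hcard.symm
      _ ≤ (Finset.univ.image f).card := Finset.card_le_card hsub
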